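/- (No heavy triangle, K₁₂ case.) For all γ, β > 0 there exist ε > 0, δ > 0 and n₀ such that the following holds for all n ≥ n₀. Let G be a graph on n vertices with independence number α(G) ≤ δ·Q(4,n), and let V₁, V₂, V₃ be pairwise disjoint vertex sets of equal size at least β·n such that each of the three pairs (V_i, V_j), i ≠ j, is ε-regular with edge density d(V_i, V_j) ≥ 3/4 + γ. Then G contains a clique on 12 vertices. -/

import Mathlib

open Finset

/-- The independence number of a graph: the largest size of an independent set of vertices. -/
noncomputable def indepNum {V : Type*} (G : SimpleGraph V) : ℕ :=
  sSup {k | ∃ s : Finset V, (∀ v ∈ s, ∀ w ∈ s, v ≠ w → ¬ G.Adj v w) ∧ s.card = k}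

/-- The inverse Ramsey number `Q t n`: the minimum independence number over all
`K_t`-free graphs on `n` vertices. -/
noncomputable def Qinv (t n : ℕ) : ℕ :=
  sInf {a | ∃ G : SimpleGraph (Fin n), G.CliqueFree t ∧ indepNum G = a}

/-- The edge density between two finite vertex sets, as a real number. -/
noncomputable def density {V : Type*} (G : SimpleGraph V) (A B : Finset V) : ℝ :=
  by classical exact (G.edgeDensity A B : ℝ)

/-- The pair `(A, B)` is `ε`-regular: all subpairs `(A', B')` with `|A'| ≥ ε|A|`,
`|B'| ≥ ε|B|` have density within `ε` of `d(A,B)`. -/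
def IsRegularPair {V : Type*} (G : SimpleGraph V) (ε : ℝ) (A B : Finset V) : Prop :=
  ∀ A' ⊆ A, ∀ B' ⊆ B, ε * A.card ≤ A'.card → ε * B.card ≤ B'.card →
    |density G A' B' - density G A B| ≤ ε

lemma indep_le_indepNum {V : Type*} [Fintype V] (G : SimpleGraph V) (s : Finset V)
    (hs : ∀ v ∈ s, ∀ w ∈ s, v ≠ w → ¬ G.Adj v w) : s.card ≤ indepNum G := by
  apply le_csSup
  · exact ⟨Fintype.card V, fun k ⟨t, _, ht⟩ => ht ▸ t.card_le_univ.trans (le_of_eq rfl)⟩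
  · exact ⟨s, hs, rfl⟩

lemma one_le_indepNum {n : ℕ} (hn : 1 ≤ n) (G : SimpleGraph (Fin n)) : 1 ≤ indepNum G := by
  have := indep_le_indepNum G {⟨0, hn⟩} (by simp)
  simpa using this

lemma Qinv_set_nonempty {t : ℕ} (ht : 2 ≤ t) (n : ℕ) :
    {a | ∃ G : SimpleGraph (Fin n), G.CliqueFree t ∧ indepNum G = a}.Nonempty :=
  ⟨indepNum (⊥ : SimpleGraph (Fin n)), ⊥, SimpleGraph.cliqueFree_bot ht, rfl⟩

lemma one_le_Qinv {n : ℕ} (hn : 1 ≤ n) {t : ℕ} (ht : 2 ≤ t) : 1 ≤ Qinv t n := by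
  obtain ⟨G, hG, hq⟩ := Nat.sInf_mem (Qinv_set_nonempty ht n)
  rw [Qinv, ← hq]
  exact one_le_indepNum hn G

lemma indepNum_mem {V : Type*} [Fintype V] (G : SimpleGraph V) :
    ∃ s : Finset V, (∀ v ∈ s, ∀ w ∈ s, v ≠ w → ¬ G.Adj v w) ∧ s.card = indepNum G := by
  have h : indepNum G ∈ {k | ∃ s : Finset V,
      (∀ v ∈ s, ∀ w ∈ s, v ≠ w → ¬ G.Adj v w) ∧ s.card = k} := by
    apply Nat.sSup_mem
    · exact ⟨0, ∅, by simp, by simp⟩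
    · exact ⟨Fintype.card V, fun k ⟨t, _, ht⟩ => ht ▸ t.card_le_univ⟩
  exact h

/-- The blow-up graph used for subadditivity of `Qinv`. -/
def blowup {m n : ℕ} (hm : 0 < m) (H : SimpleGraph (Fin m)) : SimpleGraph (Fin n) where
  Adj u v := (u : ℕ) / m = (v : ℕ) / m ∧
    H.Adj ⟨(u : ℕ) % m, Nat.mod_lt _ hm⟩ ⟨(v : ℕ) % m, Nat.mod_lt _ hm⟩
  symm := ⟨fun u v ⟨h1, h2⟩ => ⟨h1.symm, h2.symm⟩⟩
  loopless := ⟨fun u ⟨_, h⟩ => H.loopless.irrefl _ h⟩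

lemma blowup_inj {m n : ℕ} (hm : 0 < m) {u v : Fin n}
    (h1 : (u : ℕ) / m = (v : ℕ) / m) (h2 : (u : ℕ) % m = (v : ℕ) % m) : u = v := by
  apply Fin.ext
  conv_lhs => rw [← Nat.div_add_mod (u : ℕ) m]
  conv_rhs => rw [← Nat.div_add_mod (v : ℕ) m]
  rw [h1, h2]

lemma blowup_cliqueFree {m n t : ℕ} (hm : 0 < m) (H : SimpleGraph (Fin m))
    (hH : H.CliqueFree t) : (blowup (n := n) hm H).CliqueFree t := by
  intro s hs
  apply hH (s.image fun (u : Fin n) => (⟨(u : ℕ) % m, Nat.mod_lt _ hm⟩ : Fin m))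
  constructor
  · intro x hx y hy hxy
    simp only [Finset.coe_image, Set.mem_image, Finset.mem_coe] at hx hy
    obtain ⟨u, hu, rfl⟩ := hx
    obtain ⟨v, hv, rfl⟩ := hy
    have huv : u ≠ v := fun h => hxy (by rw [h])
    exact And.right (hs.1 hu hv huv)
  · rw [Finset.card_image_of_injOn, hs.2]
    intro u hu v hv h
    by_contra hne
    have h' : (⟨(u : ℕ) % m, Nat.mod_lt _ hm⟩ : Fin m) = ⟨(v : ℕ) % m, Nat.mod_lt _ hm⟩ := h
    exact H.loopless.irrefl _ (h' ▸ And.right (hs.1 hu hv hne))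

lemma indepNum_blowup_le {m n : ℕ} (hm : 0 < m) (H : SimpleGraph (Fin m)) :
    indepNum (blowup (n := n) hm H) ≤ ((n - 1) / m + 1) * indepNum H := by
  obtain ⟨s, hind, hcard⟩ := indepNum_mem (blowup (n := n) hm H)
  rw [← hcard]
  have hfib : ∀ u ∈ s, (u : ℕ) / m ∈ Finset.range ((n - 1) / m + 1) := by
    intro u _
    rw [Finset.mem_range, Nat.lt_succ_iff]
    exact Nat.div_le_div_right (by omega)
  rw [Finset.card_eq_sum_card_fiberwise hfib]
  calc ∑ b ∈ Finset.range ((n - 1) / m + 1), (s.filter fun (u : Fin n) => (u : ℕ) / m = b).card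
      ≤ ∑ b ∈ Finset.range ((n - 1) / m + 1), indepNum H := by
        apply Finset.sum_le_sum
        intro b _
        set f : Fin n → Fin m := fun u => (⟨(u : ℕ) % m, Nat.mod_lt _ hm⟩ : Fin m) with hf
        have hinj : Set.InjOn f (s.filter fun (u : Fin n) => (u : ℕ) / m = b) := by
          intro u hu v hv h
          simp only [Finset.coe_filter, Set.mem_setOf_eq] at hu hv
          exact blowup_inj hm (hu.2.trans hv.2.symm) (by simpa [hf, Fin.ext_iff] using h)
        rw [← Finset.card_image_of_injOn hinj]
        apply indep_le_indepNum
        intro x hx y hy hxy hadj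
        simp only [Finset.mem_image, Finset.mem_filter] at hx hy
        obtain ⟨u, ⟨hu, hub⟩, rfl⟩ := hx
        obtain ⟨v, ⟨hv, hvb⟩, rfl⟩ := hy
        have huv : u ≠ v := fun h => hxy (by rw [h])
        exact hind u hu v hv huv (And.intro (hub.trans hvb.symm) hadj)
    _ = ((n - 1) / m + 1) * indepNum H := by
        rw [Finset.sum_const, Finset.card_range, smul_eq_mul]

lemma Qinv_subadd {m n t : ℕ} (hm : 0 < m) (ht : 2 ≤ t) :
    Qinv t n ≤ ((n - 1) / m + 1) * Qinv t m := by
  obtain ⟨H, hH, hq⟩ := Nat.sInf_mem (Qinv_set_nonempty ht m)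
  calc Qinv t n ≤ indepNum (blowup (n := n) hm H) :=
        Nat.sInf_le ⟨blowup hm H, blowup_cliqueFree hm H hH, rfl⟩
    _ ≤ ((n - 1) / m + 1) * indepNum H := indepNum_blowup_le hm H
    _ = ((n - 1) / m + 1) * Qinv t m := by rw [hq]; rfl

lemma Qinv_card_le_of_no_K4 {n : ℕ} (G : SimpleGraph (Fin n)) (S : Finset (Fin n))
    (h : ∀ t ⊆ S, ¬ G.IsNClique 4 t) : Qinv 4 S.card ≤ indepNum G := by
  classical
  set emb : Fin S.card → Fin n := fun i => ((S.equivFin.symm i : S) : Fin n) with hemb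
  have hinj : Function.Injective emb := by
    intro a b hab
    exact S.equivFin.symm.injective (Subtype.ext hab)
  have hmem : ∀ i, emb i ∈ S := fun i => (S.equivFin.symm i).2
  set H : SimpleGraph (Fin S.card) := G.comap emb with hH
  have hfree : H.CliqueFree 4 := by
    intro t ht
    apply h (t.image emb) ?_ ?_
    · intro x hx
      simp only [Finset.mem_image] at hx
      obtain ⟨u, _, rfl⟩ := hx
      exact hmem u
    · constructor
      · intro x hx y hy hxy
        simp only [Finset.coe_image, Set.mem_image, Finset.mem_coe] at hx hy
        obtain ⟨u, hu, rfl⟩ := hx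
        obtain ⟨v, hv, rfl⟩ := hy
        have huv : u ≠ v := fun hh => hxy (by rw [hh])
        exact ht.1 hu hv huv
      · rw [Finset.card_image_of_injective _ hinj, ht.2]
  have hle : indepNum H ≤ indepNum G := by
    obtain ⟨s, hind, hcard⟩ := indepNum_mem H
    rw [← hcard, ← Finset.card_image_of_injective s hinj]
    apply indep_le_indepNum
    intro x hx y hy hxy hadj
    simp only [Finset.mem_image] at hx hy
    obtain ⟨u, hu, rfl⟩ := hx
    obtain ⟨v, hv, rfl⟩ := hy
    have huv : u ≠ v := fun hh => hxy (by rw [hh])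
    exact hind u hu v hv huv hadj
  exact le_trans (Nat.sInf_le ⟨H, hfree, rfl⟩) hle

lemma exists_K4_in_subset {n : ℕ} (G : SimpleGraph (Fin n)) (S : Finset (Fin n)) (c : ℝ)
    (hc : 0 < c) (hα : (indepNum G : ℝ) ≤ (c / (2 * (c + 1))) * Qinv 4 n)
    (h1 : 1 ≤ c * n) (hS : c * n ≤ S.card) :
    ∃ t ⊆ S, G.IsNClique 4 t := by
  by_contra hcon
  push_neg at hcon
  have hm1 : 1 ≤ S.card := by
    have : (1 : ℝ) ≤ S.card := h1.trans hS
    exact_mod_cast this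
  have hQm : 1 ≤ Qinv 4 S.card := one_le_Qinv hm1 (by norm_num)
  have hQn : Qinv 4 n ≤ ((n - 1) / S.card + 1) * Qinv 4 S.card :=
    Qinv_subadd (by omega) (by norm_num)
  have hQmα : (Qinv 4 S.card : ℝ) ≤ (indepNum G : ℝ) := by
    exact_mod_cast Qinv_card_le_of_no_K4 G S hcon
  -- bound the block count
  have hB : ((((n : ℕ) - 1) / S.card + 1 : ℕ) : ℝ) ≤ (c + 1) / c := by
    push_cast
    have h2 : ((((n : ℕ) - 1) / S.card : ℕ) : ℝ) ≤ ((n - 1 : ℕ) : ℝ) / (S.card : ℝ) :=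
      Nat.cast_div_le
    have h3 : ((n - 1 : ℕ) : ℝ) ≤ (n : ℝ) := by
      have : (n : ℕ) - 1 ≤ n := by omega
      exact_mod_cast this
    have hScpos : (0 : ℝ) < S.card := lt_of_lt_of_le (by linarith) hS
    have h4 : (n : ℝ) / (S.card : ℝ) ≤ 1 / c := by
      rw [div_le_div_iff₀ hScpos hc]
      linarith
    have h5 : ((n - 1 : ℕ) : ℝ) / (S.card : ℝ) ≤ (n : ℝ) / (S.card : ℝ) :=
      div_le_div_of_nonneg_right h3 hScpos.le
    have : ((((n : ℕ) - 1) / S.card : ℕ) : ℝ) ≤ 1 / c := h2.trans (h5.trans h4)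
    have hcc : (c + 1) / c = 1 / c + 1 := by field_simp; ring
    rw [hcc]
    linarith
  have hQnR : (Qinv 4 n : ℝ) ≤ ((((n : ℕ) - 1) / S.card + 1 : ℕ) : ℝ) * (Qinv 4 S.card : ℝ) := by
    exact_mod_cast hQn
  have hQmR : (1 : ℝ) ≤ (Qinv 4 S.card : ℝ) := by exact_mod_cast hQm
  have hQnn : (0 : ℝ) ≤ (Qinv 4 n : ℝ) := Nat.cast_nonneg _
  have hd : 0 < 2 * (c + 1) := by linarith
  have key : (Qinv 4 S.card : ℝ) ≤ (c / (2 * (c + 1))) * (((c + 1) / c) * (Qinv 4 S.card : ℝ)) := by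
    calc (Qinv 4 S.card : ℝ) ≤ (indepNum G : ℝ) := hQmα
      _ ≤ (c / (2 * (c + 1))) * Qinv 4 n := hα
      _ ≤ (c / (2 * (c + 1))) * (((((n : ℕ) - 1) / S.card + 1 : ℕ) : ℝ) * (Qinv 4 S.card : ℝ)) := by
          apply mul_le_mul_of_nonneg_left hQnR (div_nonneg hc.le hd.le)
      _ ≤ (c / (2 * (c + 1))) * (((c + 1) / c) * (Qinv 4 S.card : ℝ)) := by
          apply mul_le_mul_of_nonneg_left _ (div_nonneg hc.le hd.le)
          exact mul_le_mul_of_nonneg_right hB (by linarith)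
  have : (c / (2 * (c + 1))) * ((c + 1) / c) = 1 / 2 := by
    field_simp
  rw [← mul_assoc, this] at key
  linarith

/-- Neighbours of `v` inside `B`. -/
noncomputable def nbrs {V : Type*} (G : SimpleGraph V) (v : V) (B : Finset V) : Finset V :=
  by classical exact B.filter (G.Adj v)

lemma mem_nbrs {V : Type*} (G : SimpleGraph V) (v u : V) (B : Finset V) :
    u ∈ nbrs G v B ↔ u ∈ B ∧ G.Adj v u := by
  classical
  unfold nbrs
  simp

lemma nbrs_subset {V : Type*} (G : SimpleGraph V) (v : V) (B : Finset V) : nbrs G v B ⊆ B :=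
  fun u hu => ((mem_nbrs G v u B).1 hu).1

lemma density_nonneg {V : Type*} (G : SimpleGraph V) (A B : Finset V) : 0 ≤ density G A B := by
  classical
  unfold density
  exact_mod_cast Rel.edgeDensity_nonneg _ _ _

lemma density_le_one {V : Type*} (G : SimpleGraph V) (A B : Finset V) : density G A B ≤ 1 := by
  classical
  unfold density
  exact_mod_cast Rel.edgeDensity_le_one _ _ _

lemma density_mul_eq_sum {V : Type*} (G : SimpleGraph V) (A B : Finset V)
    (hA : A.Nonempty) (hB : B.Nonempty) :
    density G A B * (A.card * B.card) = ∑ v ∈ A, ((nbrs G v B).card : ℝ) := by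
  classical
  unfold density nbrs
  have hcard : (Rel.interedges G.Adj A B).card = ∑ v ∈ A, (B.filter (G.Adj v)).card := by
    rw [Rel.interedges_eq_biUnion, card_biUnion]
    · apply Finset.sum_congr rfl
      intro v _
      rw [Finset.card_map]
    · intro x _ y _ hxy
      simp only [Finset.disjoint_left, Finset.mem_map, Function.Embedding.coeFn_mk]
      rintro a ⟨b, _, rfl⟩ ⟨b', _, hb'⟩
      exact hxy (congrArg Prod.fst hb').symm
  have hpos : ((A.card : ℝ) * B.card) ≠ 0 := by
    have h1 : 0 < A.card := hA.card_pos
    have h2 : 0 < B.card := hB.card_pos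
    positivity
  rw [SimpleGraph.edgeDensity, Rel.edgeDensity]
  push_cast
  rw [div_mul_cancel₀ _ hpos]
  exact_mod_cast congrArg (Nat.cast : ℕ → ℝ) hcard

/-- Common neighbours of all of `t` inside `U`. -/
noncomputable def cnbrs {V : Type*} (G : SimpleGraph V) (t U : Finset V) : Finset V :=
  by classical exact U.filter (fun u => ∀ v ∈ t, G.Adj v u)

lemma mem_cnbrs {V : Type*} (G : SimpleGraph V) (t U : Finset V) (u : V) :
    u ∈ cnbrs G t U ↔ u ∈ U ∧ ∀ v ∈ t, G.Adj v u := by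
  classical
  unfold cnbrs
  simp

lemma cnbrs_subset {V : Type*} (G : SimpleGraph V) (t U : Finset V) : cnbrs G t U ⊆ U :=
  fun u hu => ((mem_cnbrs G t U u).1 hu).1

lemma bad_set_small {V : Type*} (G : SimpleGraph V) (ε d : ℝ) (A B U : Finset V)
    (hreg : IsRegularPair G ε A B) (hε : 0 < ε) (hA : A.Nonempty) (hB : B.Nonempty)
    (hU : U ⊆ B) (hUc : ε * B.card ≤ U.card) (hd : d = density G A B) :
    (((A.filter fun v => ((nbrs G v U).card : ℝ) < (d - 2 * ε) * U.card)).card : ℝ)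
      < ε * A.card := by
  classical
  by_contra hcon
  push_neg at hcon
  set Bad := A.filter fun v => ((nbrs G v U).card : ℝ) < (d - 2 * ε) * U.card with hBad
  have hBadsub : Bad ⊆ A := filter_subset _ _
  have hApos : (0 : ℝ) < A.card := by exact_mod_cast hA.card_pos
  have hBpos : (0 : ℝ) < B.card := by exact_mod_cast hB.card_pos
  have hBadpos : (0 : ℝ) < Bad.card := lt_of_lt_of_le (by positivity) hcon
  have hUpos : (0 : ℝ) < U.card := lt_of_lt_of_le (by positivity) hUc
  have hBadne : Bad.Nonempty := by
    rw [← Finset.card_pos]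
    exact_mod_cast hBadpos
  have hUne : U.Nonempty := by
    rw [← Finset.card_pos]
    exact_mod_cast hUpos
  have hregBU := hreg Bad hBadsub U hU hcon hUc
  have hlow : d - ε ≤ density G Bad U := by
    rw [hd]
    have := abs_le.1 hregBU
    linarith [this.1]
  have hsum : density G Bad U * (Bad.card * U.card) = ∑ v ∈ Bad, ((nbrs G v U).card : ℝ) :=
    density_mul_eq_sum G Bad U hBadne hUne
  have hstrict : ∑ v ∈ Bad, ((nbrs G v U).card : ℝ) < ∑ v ∈ Bad, (d - 2 * ε) * U.card := by
    apply Finset.sum_lt_sum_of_nonempty hBadne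
    intro v hv
    exact (Finset.mem_filter.1 hv).2
  rw [Finset.sum_const, nsmul_eq_mul] at hstrict
  rw [← hsum] at hstrict
  nlinarith [mul_pos hBadpos hUpos, hlow, hstrict]

lemma cnbrs_card_ge {V : Type*} (G : SimpleGraph V) (t U : Finset V) (D : ℝ)
    (hdeg : ∀ v ∈ t, D ≤ ((nbrs G v U).card : ℝ)) :
    (U.card : ℝ) - t.card * ((U.card : ℝ) - D) ≤ ((cnbrs G t U).card : ℝ) := by
  classical
  have hsub : U ⊆ cnbrs G t U ∪ t.biUnion (fun v => U \ nbrs G v U) := by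
    intro u hu
    rw [Finset.mem_union]
    by_cases hall : ∀ v ∈ t, G.Adj v u
    · exact Or.inl ((mem_cnbrs G t U u).2 ⟨hu, hall⟩)
    · push_neg at hall
      obtain ⟨v, hv, hnadj⟩ := hall
      refine Or.inr (Finset.mem_biUnion.2 ⟨v, hv, Finset.mem_sdiff.2 ⟨hu, ?_⟩⟩)
      intro hmem
      exact hnadj ((mem_nbrs G v u U).1 hmem).2
  have h1 : U.card ≤ (cnbrs G t U).card + ∑ v ∈ t, (U \ nbrs G v U).card := by
    calc U.card ≤ (cnbrs G t U ∪ t.biUnion (fun v => U \ nbrs G v U)).card :=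
          Finset.card_le_card hsub
      _ ≤ (cnbrs G t U).card + (t.biUnion (fun v => U \ nbrs G v U)).card :=
          Finset.card_union_le _ _
      _ ≤ (cnbrs G t U).card + ∑ v ∈ t, (U \ nbrs G v U).card := by
          exact Nat.add_le_add_left (Finset.card_biUnion_le) _
  have h2 : (∑ v ∈ t, ((U \ nbrs G v U).card : ℝ)) ≤ t.card * ((U.card : ℝ) - D) := by
    calc (∑ v ∈ t, ((U \ nbrs G v U).card : ℝ))
        ≤ ∑ v ∈ t, ((U.card : ℝ) - D) := by
          apply Finset.sum_le_sum
          intro v hv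
          rw [Finset.card_sdiff_of_subset (nbrs_subset G v U)]
          have hle : (nbrs G v U).card ≤ U.card := Finset.card_le_card (nbrs_subset G v U)
          push_cast [hle]
          linarith [hdeg v hv]
      _ = t.card * ((U.card : ℝ) - D) := by rw [Finset.sum_const, nsmul_eq_mul]
  have h1' : (U.card : ℝ) ≤ (cnbrs G t U).card + ∑ v ∈ t, ((U \ nbrs G v U).card : ℝ) := by
    exact_mod_cast h1
  linarith

set_option maxHeartbeats 1600000 in
theorem no_heavy_triangle_K12 (γ β : ℝ) (hγ : 0 < γ) (hβ : 0 < β) :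
    ∃ ε : ℝ, 0 < ε ∧ ∃ δ : ℝ, 0 < δ ∧ ∃ n₀ : ℕ, ∀ n : ℕ, n₀ ≤ n →
      ∀ G : SimpleGraph (Fin n),
        (indepNum G : ℝ) ≤ δ * Qinv 4 n →
        ∀ V₁ V₂ V₃ : Finset (Fin n),
          Disjoint V₁ V₂ → Disjoint V₁ V₃ → Disjoint V₂ V₃ →
          V₁.card = V₂.card → V₂.card = V₃.card →
          β * n ≤ (V₁.card : ℝ) →
          IsRegularPair G ε V₁ V₂ → IsRegularPair G ε V₁ V₃ → IsRegularPair G ε V₂ V₃ →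
          3 / 4 + γ ≤ density G V₁ V₂ → 3 / 4 + γ ≤ density G V₁ V₃ →
          3 / 4 + γ ≤ density G V₂ V₃ →
          ¬ G.CliqueFree 12 := by
  classical
  set γ' : ℝ := min γ (1/4) with hγ'def
  have hγ'pos : 0 < γ' := lt_min hγ (by norm_num)
  have hγ'le : γ' ≤ 1/4 := min_le_right _ _
  have hγ'γ : γ' ≤ γ := min_le_left _ _
  have hγ'le1 : γ' ≤ 1 := by linarith only [hγ'le]
  set ε : ℝ := γ' / 4 with hεdef
  have hεpos : 0 < ε := by positivity
  have hεle : ε ≤ 1/16 := by rw [hεdef]; linarith only [hγ'le]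
  set c : ℝ := γ' ^ 2 * β with hcdef
  have hcpos : 0 < c := by positivity
  have hγsq : γ' ^ 2 ≤ 1/16 := by nlinarith [hγ'pos, hγ'le]
  have hγsq' : γ' ^ 2 ≤ γ' := by nlinarith [hγ'pos, hγ'le]
  have hc16 : c ≤ (1/16) * β := by
    rw [hcdef]; exact mul_le_mul_of_nonneg_right hγsq hβ.le
  have hcγβ : c ≤ γ' * β := by
    rw [hcdef]; exact mul_le_mul_of_nonneg_right hγsq' hβ.le
  have hcβ : c ≤ β := by linarith only [hc16, hβ]
  set δ : ℝ := c / (2 * (c + 1)) with hδdef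
  have hδpos : 0 < δ := div_pos hcpos (by linarith only [hcpos])
  refine ⟨ε, hεpos, δ, hδpos, ⌈1/c⌉₊, ?_⟩
  intro n hn G hα V₁ V₂ V₃ h12 h13 h23 hc12 hc23 hV1 hr12 hr13 hr23 hd12 hd13 hd23 hcf
  -- basic size facts
  have hcn : 1 ≤ c * n := by
    have h1 : (1/c : ℝ) ≤ (⌈1/c⌉₊ : ℝ) := Nat.le_ceil _
    have h2 : ((⌈1/c⌉₊ : ℕ) : ℝ) ≤ (n : ℝ) := by exact_mod_cast hn
    have h3 : (1/c : ℝ) ≤ n := h1.trans h2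
    rw [div_le_iff₀ hcpos] at h3
    linarith only [h3]
  set a : ℝ := (V₁.card : ℝ) with hadef
  have ha2 : (V₂.card : ℝ) = a := by rw [hadef, hc12]
  have ha3 : (V₃.card : ℝ) = a := by rw [hadef, hc12, hc23]
  have hnn : (0:ℝ) ≤ n := Nat.cast_nonneg n
  have haβ : β * n ≤ a := hV1
  have hacn : c * n ≤ a := le_trans (mul_le_mul_of_nonneg_right hcβ hnn) haβ
  have ha1 : 1 ≤ a := le_trans hcn hacn
  have ha0 : (0:ℝ) ≤ a := by linarith only [ha1]
  have hεa : ε * a = γ' / 4 * a := by rw [hεdef]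
  have hγa0 : 0 ≤ γ' * a := mul_nonneg hγ'pos.le ha0
  have hγaa : γ' * a ≤ 1 * a := mul_le_mul_of_nonneg_right hγ'le1 ha0
  have hane1 : V₁.Nonempty := by
    rw [← Finset.card_pos]
    have h : (0:ℝ) < V₁.card := by rw [← hadef]; linarith only [ha1]
    exact_mod_cast h
  have hane2 : V₂.Nonempty := by
    rw [← Finset.card_pos]
    have h : (0:ℝ) < V₂.card := by rw [ha2]; linarith only [ha1]
    exact_mod_cast h
  have hane3 : V₃.Nonempty := by
    rw [← Finset.card_pos]
    have h : (0:ℝ) < V₃.card := by rw [ha3]; linarith only [ha1]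
    exact_mod_cast h
  set d12 := density G V₁ V₂ with hd12def
  set d13 := density G V₁ V₃ with hd13def
  set d23 := density G V₂ V₃ with hd23def
  have hd12' : 3/4 + γ' ≤ d12 := le_trans (by linarith only [hγ'γ]) hd12
  have hd13' : 3/4 + γ' ≤ d13 := le_trans (by linarith only [hγ'γ]) hd13
  have hd23' : 3/4 + γ' ≤ d23 := le_trans (by linarith only [hγ'γ]) hd23
  -- bad vertices in V₁ for the pairs (V₁,V₂) and (V₁,V₃)
  set Bad12 := V₁.filter fun v => ((nbrs G v V₂).card : ℝ) < (d12 - 2 * ε) * V₂.card with hB12def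
  set Bad13 := V₁.filter fun v => ((nbrs G v V₃).card : ℝ) < (d13 - 2 * ε) * V₃.card with hB13def
  have hB12 : (Bad12.card : ℝ) < ε * V₁.card :=
    bad_set_small G ε d12 V₁ V₂ V₂ hr12 hεpos hane1 hane2 (subset_refl _)
      (by rw [ha2]; linarith only [hεa, hγaa, ha0, hγa0]) rfl
  have hB13 : (Bad13.card : ℝ) < ε * V₁.card :=
    bad_set_small G ε d13 V₁ V₃ V₃ hr13 hεpos hane1 hane3 (subset_refl _)
      (by rw [ha3]; linarith only [hεa, hγaa, ha0, hγa0]) rfl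
  rw [← hadef] at hB12 hB13
  set G₁ := V₁ \ (Bad12 ∪ Bad13) with hG₁def
  have hG₁sub : G₁ ⊆ V₁ := Finset.sdiff_subset
  have hG₁card : a - 2 * ε * a ≤ (G₁.card : ℝ) := by
    have hcover : V₁ ⊆ G₁ ∪ (Bad12 ∪ Bad13) := by
      intro v hv
      rw [Finset.mem_union, hG₁def, Finset.mem_sdiff]
      by_cases h : v ∈ Bad12 ∪ Bad13
      · exact Or.inr h
      · exact Or.inl ⟨hv, h⟩
    have h1 : V₁.card ≤ G₁.card + (Bad12.card + Bad13.card) := by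
      calc V₁.card ≤ (G₁ ∪ (Bad12 ∪ Bad13)).card := Finset.card_le_card hcover
        _ ≤ G₁.card + (Bad12 ∪ Bad13).card := Finset.card_union_le _ _
        _ ≤ G₁.card + (Bad12.card + Bad13.card) :=
            Nat.add_le_add_left (Finset.card_union_le _ _) _
    have h1' : (V₁.card : ℝ) ≤ (G₁.card : ℝ) + ((Bad12.card : ℝ) + (Bad13.card : ℝ)) := by
      exact_mod_cast h1
    rw [← hadef] at h1'
    linarith only [h1', hB12, hB13]
  have hG₁n : c * n ≤ (G₁.card : ℝ) := by
    have hp1 : c * n ≤ 1/16 * β * n := mul_le_mul_of_nonneg_right hc16 hnn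
    have hp2 : ε * a ≤ 1/16 * a := mul_le_mul_of_nonneg_right hεle ha0
    linarith only [hG₁card, hp1, hp2, haβ, ha0]
  -- first K₄
  obtain ⟨t₁, ht₁sub, ht₁cl⟩ := exists_K4_in_subset G G₁ c hcpos hα hcn hG₁n
  have ht₁V : t₁ ⊆ V₁ := ht₁sub.trans hG₁sub
  have ht₁card : (t₁.card : ℝ) = 4 := by rw [ht₁cl.2]; norm_num
  have hdeg12 : ∀ v ∈ t₁, (d12 - 2 * ε) * V₂.card ≤ ((nbrs G v V₂).card : ℝ) := by
    intro v hv
    have hvG : v ∈ G₁ := ht₁sub hv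
    rw [hG₁def, Finset.mem_sdiff, Finset.mem_union] at hvG
    have hnb : v ∉ Bad12 := fun h => hvG.2 (Or.inl h)
    rw [hB12def, Finset.mem_filter] at hnb
    push_neg at hnb
    exact hnb hvG.1
  have hdeg13 : ∀ v ∈ t₁, (d13 - 2 * ε) * V₃.card ≤ ((nbrs G v V₃).card : ℝ) := by
    intro v hv
    have hvG : v ∈ G₁ := ht₁sub hv
    rw [hG₁def, Finset.mem_sdiff, Finset.mem_union] at hvG
    have hnb : v ∉ Bad13 := fun h => hvG.2 (Or.inr h)
    rw [hB13def, Finset.mem_filter] at hnb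
    push_neg at hnb
    exact hnb hvG.1
  -- common neighbourhoods of t₁
  set U₂ := cnbrs G t₁ V₂ with hU₂def
  set U₃ := cnbrs G t₁ V₃ with hU₃def
  have hU₂card : 2 * γ' * a ≤ (U₂.card : ℝ) := by
    have h := cnbrs_card_ge G t₁ V₂ ((d12 - 2 * ε) * V₂.card) hdeg12
    rw [ht₁card, ha2] at h
    have hp : (3/4 + γ') * a ≤ d12 * a := mul_le_mul_of_nonneg_right hd12' ha0
    linarith only [h, hp, hεa]
  have hU₃card : 2 * γ' * a ≤ (U₃.card : ℝ) := by
    have h := cnbrs_card_ge G t₁ V₃ ((d13 - 2 * ε) * V₃.card) hdeg13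
    rw [ht₁card, ha3] at h
    have hp : (3/4 + γ') * a ≤ d13 * a := mul_le_mul_of_nonneg_right hd13' ha0
    linarith only [h, hp, hεa]
  -- bad vertices of V₂ with respect to U₃
  set Bad2 := V₂.filter fun v => ((nbrs G v U₃).card : ℝ) < (d23 - 2 * ε) * U₃.card with hB2def
  have hB2 : (Bad2.card : ℝ) < ε * V₂.card :=
    bad_set_small G ε d23 V₂ V₃ U₃ hr23 hεpos hane2 hane3 (cnbrs_subset G t₁ V₃)
      (by rw [ha3]; linarith only [hU₃card, hεa, hγa0]) rfl
  rw [ha2] at hB2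
  set S₂ := U₂ \ Bad2 with hS₂def
  have hS₂sub : S₂ ⊆ V₂ := Finset.sdiff_subset.trans (cnbrs_subset G t₁ V₂)
  have hS₂card : c * n ≤ (S₂.card : ℝ) := by
    have h1 : U₂.card ≤ S₂.card + Bad2.card := by
      calc U₂.card ≤ (S₂ ∪ Bad2).card := Finset.card_le_card (by
            intro v hv
            rw [Finset.mem_union, hS₂def, Finset.mem_sdiff]
            by_cases h : v ∈ Bad2
            · exact Or.inr h
            · exact Or.inl ⟨hv, h⟩)
        _ ≤ S₂.card + Bad2.card := Finset.card_union_le _ _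
    have h1' : (U₂.card : ℝ) ≤ (S₂.card : ℝ) + (Bad2.card : ℝ) := by exact_mod_cast h1
    have h2 : γ' * a ≤ (S₂.card : ℝ) := by
      linarith only [h1', hB2, hU₂card, hεa, hγa0]
    have hp1 : c * n ≤ γ' * β * n := mul_le_mul_of_nonneg_right hcγβ hnn
    have hp2 : γ' * (β * n) ≤ γ' * a := mul_le_mul_of_nonneg_left haβ hγ'pos.le
    linarith only [h2, hp1, hp2]
  -- second K₄
  obtain ⟨t₂, ht₂sub, ht₂cl⟩ := exists_K4_in_subset G S₂ c hcpos hα hcn hS₂card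
  have ht₂V : t₂ ⊆ V₂ := ht₂sub.trans hS₂sub
  have ht₂U₂ : t₂ ⊆ U₂ := ht₂sub.trans Finset.sdiff_subset
  have ht₂card : (t₂.card : ℝ) = 4 := by rw [ht₂cl.2]; norm_num
  have hdeg23 : ∀ v ∈ t₂, (d23 - 2 * ε) * U₃.card ≤ ((nbrs G v U₃).card : ℝ) := by
    intro v hv
    have hvS : v ∈ S₂ := ht₂sub hv
    rw [hS₂def, Finset.mem_sdiff] at hvS
    have hnb := hvS.2
    rw [hB2def, Finset.mem_filter] at hnb
    push_neg at hnb
    exact hnb (hS₂sub (ht₂sub hv))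
  -- common neighbourhood of t₂ inside U₃
  set W₃ := cnbrs G t₂ U₃ with hW₃def
  have hW₃card : c * n ≤ (W₃.card : ℝ) := by
    have h := cnbrs_card_ge G t₂ U₃ ((d23 - 2 * ε) * U₃.card) hdeg23
    rw [ht₂card] at h
    set u : ℝ := (U₃.card : ℝ) with hudef
    have hu0 : (0:ℝ) ≤ u := Nat.cast_nonneg _
    have hεu : ε * u = γ' / 4 * u := by rw [hεdef]
    have hp : (3/4 + γ') * u ≤ d23 * u := mul_le_mul_of_nonneg_right hd23' hu0
    have h2γ : 2 * γ' * (2 * γ' * a) ≤ 2 * γ' * u :=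
      mul_le_mul_of_nonneg_left hU₃card (by linarith only [hγ'pos])
    have hcn' : c * n = γ' ^ 2 * β * n := by rw [hcdef]
    have hp2 : γ' ^ 2 * (β * n) ≤ γ' ^ 2 * a := mul_le_mul_of_nonneg_left haβ (sq_nonneg γ')
    have hγ2a : 0 ≤ γ' ^ 2 * a := mul_nonneg (sq_nonneg γ') ha0
    linarith only [h, hp, hεu, h2γ, hcn', hp2, hγ2a]
  -- third K₄
  obtain ⟨t₃, ht₃sub, ht₃cl⟩ := exists_K4_in_subset G W₃ c hcpos hα hcn hW₃card
  have ht₃U₃ : t₃ ⊆ U₃ := ht₃sub.trans (cnbrs_subset G t₂ U₃)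
  have ht₃V : t₃ ⊆ V₃ := ht₃U₃.trans (cnbrs_subset G t₁ V₃)
  -- cross adjacencies
  have hA12 : ∀ u ∈ t₁, ∀ w ∈ t₂, G.Adj u w := fun u hu w hw =>
    ((mem_cnbrs G t₁ V₂ w).1 (ht₂U₂ hw)).2 u hu
  have hA13 : ∀ u ∈ t₁, ∀ w ∈ t₃, G.Adj u w := fun u hu w hw =>
    ((mem_cnbrs G t₁ V₃ w).1 (ht₃U₃ hw)).2 u hu
  have hA23 : ∀ u ∈ t₂, ∀ w ∈ t₃, G.Adj u w := fun u hu w hw =>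
    ((mem_cnbrs G t₂ U₃ w).1 (ht₃sub hw)).2 u hu
  -- assemble the K₁₂
  have hdisj12 : Disjoint t₁ t₂ := Finset.disjoint_of_subset_left ht₁V
    (Finset.disjoint_of_subset_right ht₂V h12)
  have hdisj13 : Disjoint t₁ t₃ := Finset.disjoint_of_subset_left ht₁V
    (Finset.disjoint_of_subset_right ht₃V h13)
  have hdisj23 : Disjoint t₂ t₃ := Finset.disjoint_of_subset_left ht₂V
    (Finset.disjoint_of_subset_right ht₃V h23)
  apply hcf (t₁ ∪ t₂ ∪ t₃)
  constructor
  · intro x hx y hy hxy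
    simp only [Finset.coe_union, Set.mem_union, Finset.mem_coe] at hx hy
    rcases hx with (hx | hx) | hx <;> rcases hy with (hy | hy) | hy
    · exact ht₁cl.1 hx hy hxy
    · exact hA12 x hx y hy
    · exact hA13 x hx y hy
    · exact (hA12 y hy x hx).symm
    · exact ht₂cl.1 hx hy hxy
    · exact hA23 x hx y hy
    · exact (hA13 y hy x hx).symm
    · exact (hA23 y hy x hx).symm
    · exact ht₃cl.1 hx hy hxy
  · rw [Finset.card_union_of_disjoint, Finset.card_union_of_disjoint hdisj12,
      ht₁cl.2, ht₂cl.2, ht₃cl.2]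
    rw [Finset.disjoint_union_left]
    exact ⟨hdisj13, hdisj23⟩
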